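/- Let (X,d,≤,≪,τ) be a Lorentzian pre-length space with uniformly continuous τ, and X = ⋃_{i∈ℕ} U_i. Then Dim^τ(X) = sup_{i∈ℕ} Dim^τ(U_i). -/

import Mathlib

open Set MeasureTheory
open scoped ENNReal NNReal

noncomputable section

/-- A Lorentzian pre-length space structure on a metric space `X`. -/
structure LPLS (X : Type*) [MetricSpace X] : Type _ where
  causal : X → X → Prop
  chron : X → X → Prop
  tau : X → X → ℝ≥0∞
  causal_refl : ∀ x, causal x x
  causal_trans : ∀ x y z, causal x y → causal y z → causal x z
  chron_trans : ∀ x y z, chron x y → chron y z → chron x z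
  chron_causal : ∀ x y, chron x y → causal x y
  tau_lsc : LowerSemicontinuous fun p : X × X => tau p.1 p.2
  tau_rev_triangle : ∀ x y z, causal x y → causal y z → tau x y + tau y z ≤ tau x z
  tau_eq_zero : ∀ x y, ¬ causal x y → tau x y = 0
  tau_pos_iff : ∀ x y, 0 < tau x y ↔ chron x y

variable {Y : Type*}

/-- The causal diamond `J(a,b)`. -/
def cdiam (causal : Y → Y → Prop) (a b : Y) : Set Y := {z | causal a z ∧ causal z b}

/-- The set associated to a possibly-empty element of `𝒥`. -/
def optDiamond (causal : Y → Y → Prop) : Option (Y × Y) → Set Y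
  | none => ∅
  | some ab => cdiam causal ab.1 ab.2

/-- The weight `ρ_N`. -/
def optWeight (tau : Y → Y → ℝ≥0∞) (ω N : ℝ) : Option (Y × Y) → ℝ≥0∞
  | none => 0
  | some ab => ENNReal.ofReal ω * tau ab.1 ab.2 ^ N

/-- Diameter with respect to a (pseudo-)edistance `e`. -/
def ediamWith (e : Y → Y → ℝ≥0∞) (S : Set Y) : ℝ≥0∞ := ⨆ p ∈ S, ⨆ q ∈ S, e p q

/-- `V^N_δ`. -/
def Vdelta (e : Y → Y → ℝ≥0∞) (causal : Y → Y → Prop) (tau : Y → Y → ℝ≥0∞)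
    (ω N : ℝ) (δ : ℝ≥0∞) (A : Set Y) : ℝ≥0∞ :=
  ⨅ (c : ℕ → Option (Y × Y)) (_ : ∀ i, ∀ ab ∈ c i, causal ab.1 ab.2)
    (_ : ∀ i, ediamWith e (optDiamond causal (c i)) < δ)
    (_ : A ⊆ ⋃ i, optDiamond causal (c i)),
    ∑' i, optWeight tau ω N (c i)

/-- `V^N`. -/
def Vmeas (e : Y → Y → ℝ≥0∞) (causal : Y → Y → Prop) (tau : Y → Y → ℝ≥0∞)
    (ω N : ℝ) (A : Set Y) : ℝ≥0∞ :=
  ⨆ (δ : ℝ≥0∞) (_ : 0 < δ), Vdelta e causal tau ω N δ A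

/-- `W^N_δ`. -/
def Wdelta (e : Y → Y → ℝ≥0∞) (causal : Y → Y → Prop) (tau : Y → Y → ℝ≥0∞)
    (ω N : ℝ) (δ : ℝ≥0∞) (A : Set Y) : ℝ≥0∞ :=
  ⨅ (c : ℕ → Option (Y × Y)) (_ : ∀ i, ∀ ab ∈ c i, causal ab.1 ab.2)
    (_ : ∀ i, ∀ ab ∈ c i, e ab.1 ab.2 < δ)
    (_ : A ⊆ ⋃ i, optDiamond causal (c i)),
    ∑' i, optWeight tau ω N (c i)

/-- `W^N`. -/
def Wmeas (e : Y → Y → ℝ≥0∞) (causal : Y → Y → Prop) (tau : Y → Y → ℝ≥0∞)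
    (ω N : ℝ) (A : Set Y) : ℝ≥0∞ :=
  ⨆ (δ : ℝ≥0∞) (_ : 0 < δ), Wdelta e causal tau ω N δ A

/-- Uniform continuity of the time separation. -/
def TauUniformlyContinuous {Y : Type*} [MetricSpace Y] (tau : Y → Y → ℝ≥0∞) : Prop :=
  ∀ ε : ℝ≥0∞, 0 < ε → ∃ δ > (0 : ℝ), ∀ p q p' q' : Y, dist p p' < δ → dist q q' < δ →
    tau p' q' < tau p q + ε ∧ tau p q < tau p' q' + ε

/-- Timelike Hausdorff dimension for `W^N`. -/
def dimTauW (e : Y → Y → ℝ≥0∞) (causal : Y → Y → Prop) (tau : Y → Y → ℝ≥0∞)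
    (ω : ℝ) (A : Set Y) : ℝ≥0∞ :=
  ⨅ (N : ℝ≥0) (_ : Wmeas e causal tau ω (N : ℝ) A < ⊤), (N : ℝ≥0∞)

section AuxLemmas

variable {Y : Type*} (e : Y → Y → ℝ≥0∞) (causal : Y → Y → Prop) (tau : Y → Y → ℝ≥0∞) (ω N : ℝ)

lemma Wdelta_mono_set {A B : Set Y} (h : A ⊆ B) (δ : ℝ≥0∞) :
    Wdelta e causal tau ω N δ A ≤ Wdelta e causal tau ω N δ B := by
  refine le_iInf fun c => le_iInf fun h1 => le_iInf fun h2 => le_iInf fun h3 => ?_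
  exact iInf_le_of_le c (iInf_le_of_le h1 (iInf_le_of_le h2
    (iInf_le_of_le (h.trans h3) le_rfl)))

lemma Wdelta_anti {δ δ' : ℝ≥0∞} (h : δ' ≤ δ) (A : Set Y) :
    Wdelta e causal tau ω N δ A ≤ Wdelta e causal tau ω N δ' A := by
  refine le_iInf fun c => le_iInf fun h1 => le_iInf fun h2 => le_iInf fun h3 => ?_
  exact iInf_le_of_le c (iInf_le_of_le h1
    (iInf_le_of_le (fun i ab hab => lt_of_lt_of_le (h2 i ab hab) h)
      (iInf_le_of_le h3 le_rfl)))

lemma Wdelta_le_Wmeas {δ : ℝ≥0∞} (hδ : 0 < δ) (A : Set Y) :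
    Wdelta e causal tau ω N δ A ≤ Wmeas e causal tau ω N A :=
  le_iSup₂_of_le δ hδ le_rfl

lemma Wmeas_mono_set {A B : Set Y} (h : A ⊆ B) :
    Wmeas e causal tau ω N A ≤ Wmeas e causal tau ω N B :=
  iSup₂_mono fun δ _ => Wdelta_mono_set e causal tau ω N h δ

lemma dimTauW_mono_set {A B : Set Y} (h : A ⊆ B) :
    dimTauW e causal tau ω A ≤ dimTauW e causal tau ω B := by
  refine le_iInf fun n => le_iInf fun hn => ?_
  exact iInf_le_of_le n (iInf_le_of_le
    (lt_of_le_of_lt (Wmeas_mono_set e causal tau ω _ h) hn) le_rfl)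

lemma Wdelta_iUnion_zero (A : ℕ → Set Y) (δ : ℝ≥0∞)
    (h : ∀ i, Wdelta e causal tau ω N δ (A i) = 0) :
    Wdelta e causal tau ω N δ (⋃ i, A i) = 0 := by
  refine le_antisymm ?_ zero_le
  refine ENNReal.le_of_forall_pos_le_add fun ε hε _ => ?_
  obtain ⟨ε', hε'pos, hε'sum⟩ :=
    ENNReal.exists_pos_sum_of_countable (ε := (ε : ℝ≥0∞)) (by exact_mod_cast hε.ne') ℕ
  have H : ∀ i, ∃ c : ℕ → Option (Y × Y), (∀ j, ∀ ab ∈ c j, causal ab.1 ab.2) ∧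
      (∀ j, ∀ ab ∈ c j, e ab.1 ab.2 < δ) ∧ (A i ⊆ ⋃ j, optDiamond causal (c j)) ∧
      ∑' j, optWeight tau ω N (c j) < ε' i := by
    intro i
    have h0 : Wdelta e causal tau ω N δ (A i) < ε' i := by
      rw [h i]; exact_mod_cast hε'pos i
    simp only [Wdelta, iInf_lt_iff] at h0
    obtain ⟨c, h1, h2, h3, h4⟩ := h0
    exact ⟨c, h1, h2, h3, h4⟩
  choose c h1 h2 h3 h4 using H
  set q : ℕ ≃ ℕ × ℕ := (Denumerable.eqv (ℕ × ℕ)).symm with hq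
  set C : ℕ → Option (Y × Y) := fun n => c (q n).1 (q n).2 with hC
  have hcov : (⋃ i, A i) ⊆ ⋃ n, optDiamond causal (C n) := by
    refine iUnion_subset fun i x hx => ?_
    obtain ⟨S, ⟨j, rfl⟩, hj⟩ := h3 i hx
    refine mem_iUnion.2 ⟨q.symm (i, j), ?_⟩
    simpa only [hC, Equiv.apply_symm_apply] using hj
  have hle : Wdelta e causal tau ω N δ (⋃ i, A i) ≤ ∑' n, optWeight tau ω N (C n) :=
    iInf_le_of_le C (iInf_le_of_le (fun n => h1 _ _)
      (iInf_le_of_le (fun n => h2 _ _) (iInf_le_of_le hcov le_rfl)))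
  have hsum : ∑' n, optWeight tau ω N (C n) ≤ ∑' i, (ε' i : ℝ≥0∞) := by
    have e1 : ∑' n, optWeight tau ω N (C n)
        = ∑' p : ℕ × ℕ, optWeight tau ω N (c p.1 p.2) :=
      q.tsum_eq fun p => optWeight tau ω N (c p.1 p.2)
    rw [e1, ENNReal.tsum_prod (f := fun i j => optWeight tau ω N (c i j))]
    exact ENNReal.tsum_le_tsum fun i => (h4 i).le
  calc Wdelta e causal tau ω N δ (⋃ i, A i) ≤ ∑' i, (ε' i : ℝ≥0∞) := hle.trans hsum
    _ ≤ 0 + ε := by rw [zero_add]; exact hε'sum.le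

end AuxLemmas

lemma LPLS.tau_self_zero {X : Type*} [MetricSpace X] (L : LPLS X)
    (htau : TauUniformlyContinuous L.tau) (a : X) : L.tau a a = 0 := by
  obtain ⟨δ, hδ, h⟩ := htau 1 one_pos
  have h1 : L.tau a a < L.tau a a + 1 :=
    (h a a a a (by simpa using hδ) (by simpa using hδ)).1
  have hnt : L.tau a a ≠ ⊤ := by
    intro ht
    rw [ht] at h1
    simp at h1
  have htri := L.tau_rev_triangle a a a (L.causal_refl a) (L.causal_refl a)
  by_contra h0
  exact absurd htri (not_le.2 (ENNReal.lt_add_right hnt h0))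

lemma Wmeas_zero_of_lt {X : Type*} [MetricSpace X] (L : LPLS X) (ω : ℝ)
    (htau : TauUniformlyContinuous L.tau) (A : Set X) (m N : ℝ) (hm0 : 0 ≤ m) (hmN : m < N)
    (hfin : Wmeas (fun a b => edist a b) L.causal L.tau ω m A < ⊤) :
    Wmeas (fun a b => edist a b) L.causal L.tau ω N A = 0 := by
  set C := Wmeas (fun a b => edist a b) L.causal L.tau ω m A with hCdef
  set r : ℝ := N - m with hr
  have hrpos : 0 < r := sub_pos.2 hmN
  refine le_antisymm ?_ zero_le
  refine iSup₂_le fun δ hδ => ?_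
  refine ENNReal.le_of_forall_pos_le_add fun ε0 hε0 _ => ?_
  -- choose ε
  have hC1top : C + 1 ≠ ⊤ := by
    simp [ENNReal.add_ne_top, hfin.ne]
  have hC10 : C + 1 ≠ 0 := by simp
  have hquotpos : 0 < (ε0 : ℝ≥0∞) / (C + 1) :=
    ENNReal.div_pos (by exact_mod_cast hε0.ne') hC1top
  have hquottop : (ε0 : ℝ≥0∞) / (C + 1) ≠ ⊤ := by
    simp [ENNReal.div_eq_top, hC10]
  set ε : ℝ≥0∞ := min 1 (((ε0 : ℝ≥0∞) / (C + 1)) ^ (1 / r)) with hε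
  have hεpos : 0 < ε :=
    lt_min one_pos (ENNReal.rpow_pos hquotpos hquottop)
  have hεtop : ε ≠ ⊤ := by
    refine ne_top_of_le_ne_top (by simp : (1:ℝ≥0∞) ≠ ⊤) (min_le_left _ _)
  have hεbound : ε ^ r * (C + 1) ≤ (ε0 : ℝ≥0∞) := by
    have h1 : ε ^ r ≤ (ε0 : ℝ≥0∞) / (C + 1) := by
      calc ε ^ r ≤ ((((ε0 : ℝ≥0∞) / (C + 1)) ^ (1 / r))) ^ r :=
            ENNReal.rpow_le_rpow (min_le_right _ _) hrpos.le
        _ = ((ε0 : ℝ≥0∞) / (C + 1)) ^ ((1 / r) * r) := by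
            rw [← ENNReal.rpow_mul]
        _ = (ε0 : ℝ≥0∞) / (C + 1) := by
            rw [one_div_mul_cancel hrpos.ne', ENNReal.rpow_one]
    calc ε ^ r * (C + 1) ≤ ((ε0 : ℝ≥0∞) / (C + 1)) * (C + 1) :=
          mul_le_mul_left h1 _
      _ = (ε0 : ℝ≥0∞) := ENNReal.div_mul_cancel hC10 hC1top
  -- uniform continuity
  obtain ⟨δ1, hδ1, hUC⟩ := htau ε hεpos
  set δ'' : ℝ≥0∞ := min δ (ENNReal.ofReal δ1) with hδ''
  have hδ''pos : 0 < δ'' := lt_min hδ (ENNReal.ofReal_pos.2 hδ1)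
  -- get a covering for the m-measure
  have hlt : Wdelta (fun a b => edist a b) L.causal L.tau ω m δ'' A < C + 1 :=
    lt_of_le_of_lt (Wdelta_le_Wmeas _ _ _ _ _ hδ''pos A)
      (ENNReal.lt_add_right hfin.ne one_ne_zero)
  rw [Wdelta] at hlt
  simp only [iInf_lt_iff] at hlt
  obtain ⟨c, h1, h2, h3, h4⟩ := hlt
  -- τ is small on the covering
  have htausmall : ∀ i, ∀ ab ∈ c i, L.tau ab.1 ab.2 < ε := by
    intro i ab hab
    have hd : dist ab.1 ab.2 < δ1 := by
      have := lt_of_lt_of_le (h2 i ab hab) (min_le_right _ _)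
      exact edist_lt_ofReal.1 this
    have := (hUC ab.1 ab.1 ab.1 ab.2 (by simpa using hδ1) hd).1
    rwa [L.tau_self_zero htau ab.1, zero_add] at this
  -- per-term weight bound
  have hweight : ∀ i, optWeight L.tau ω N (c i) ≤ ε ^ r * optWeight L.tau ω m (c i) := by
    intro i
    rcases hoi : c i with _ | ab
    · simp [optWeight]
    · have hτ : L.tau ab.1 ab.2 < ε := htausmall i ab (by rw [hoi]; rfl)
      simp only [optWeight]
      rw [mul_comm (ε ^ r), mul_assoc]
      refine mul_le_mul_right ?_ _
      rcases eq_or_ne (L.tau ab.1 ab.2) 0 with h0 | h0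
      · rw [h0, ENNReal.zero_rpow_of_pos (lt_of_le_of_lt (by linarith : (0:ℝ) ≤ m) hmN)]
        exact zero_le
      · have hτtop : L.tau ab.1 ab.2 ≠ ⊤ := (hτ.trans hεtop.lt_top).ne
        have hmr : m + r = N := by rw [hr]; ring
        calc L.tau ab.1 ab.2 ^ N = L.tau ab.1 ab.2 ^ m * L.tau ab.1 ab.2 ^ r := by
              rw [← ENNReal.rpow_add m r h0 hτtop, hmr]
          _ ≤ L.tau ab.1 ab.2 ^ m * ε ^ r :=
              mul_le_mul_right (ENNReal.rpow_le_rpow hτ.le hrpos.le) _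
  -- assemble
  have hstep1 : Wdelta (fun a b => edist a b) L.causal L.tau ω N δ A
      ≤ Wdelta (fun a b => edist a b) L.causal L.tau ω N δ'' A :=
    Wdelta_anti _ _ _ _ _ (min_le_left _ _) A
  have hstep2 : Wdelta (fun a b => edist a b) L.causal L.tau ω N δ'' A
      ≤ ∑' i, optWeight L.tau ω N (c i) :=
    iInf_le_of_le c (iInf_le_of_le h1 (iInf_le_of_le h2 (iInf_le_of_le h3 le_rfl)))
  have hstep3 : ∑' i, optWeight L.tau ω N (c i) ≤ ε ^ r * (C + 1) := by
    calc ∑' i, optWeight L.tau ω N (c i)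
        ≤ ∑' i, ε ^ r * optWeight L.tau ω m (c i) := ENNReal.tsum_le_tsum hweight
      _ = ε ^ r * ∑' i, optWeight L.tau ω m (c i) := ENNReal.tsum_mul_left
      _ ≤ ε ^ r * (C + 1) := mul_le_mul_right h4.le _
  calc Wdelta (fun a b => edist a b) L.causal L.tau ω N δ A
      ≤ ε ^ r * (C + 1) := hstep1.trans (hstep2.trans hstep3)
    _ ≤ (ε0 : ℝ≥0∞) := hεbound
    _ = 0 + (ε0 : ℝ≥0∞) := (zero_add _).symm

/-- If `τ` is uniformly continuous and `X = ⋃ᵢ Uᵢ`, then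
`Dim^τ(X) = supᵢ Dim^τ(Uᵢ)`. -/
theorem stmt9 {X : Type*} [MetricSpace X] (L : LPLS X) (ω : ℝ) (hω : 0 < ω)
    (htau : TauUniformlyContinuous L.tau) (U : ℕ → Set X) (hU : (⋃ i, U i) = Set.univ) :
    dimTauW (fun a b => edist a b) L.causal L.tau ω (Set.univ : Set X) =
      ⨆ i, dimTauW (fun a b => edist a b) L.causal L.tau ω (U i) := by
  refine le_antisymm ?_ (iSup_le fun i => dimTauW_mono_set _ _ _ _ (subset_univ _))
  by_contra hlt
  push_neg at hlt
  obtain ⟨N, hsN, hNd⟩ := ENNReal.lt_iff_exists_nnreal_btwn.1 hlt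
  have key : ∀ i, Wmeas (fun a b => edist a b) L.causal L.tau ω (N : ℝ) (U i) = 0 := by
    intro i
    have hi : dimTauW (fun a b : X => edist a b) L.causal L.tau ω (U i) < (N : ℝ≥0∞) :=
      lt_of_le_of_lt (le_iSup (fun j => dimTauW (fun a b : X => edist a b) L.causal L.tau ω (U j)) i) hsN
    simp only [dimTauW, iInf_lt_iff] at hi
    obtain ⟨m, hmfin, hmN⟩ := hi
    exact Wmeas_zero_of_lt L ω htau (U i) m N m.2 (by exact_mod_cast hmN) hmfin
  have hWuniv : Wmeas (fun a b => edist a b) L.causal L.tau ω (N : ℝ) (univ : Set X) = 0 := by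
    rw [← hU]
    refine le_antisymm (iSup₂_le fun δ hδ => ?_) zero_le
    refine le_of_eq (Wdelta_iUnion_zero _ _ _ _ _ U δ fun i => le_antisymm ?_ zero_le)
    exact (Wdelta_le_Wmeas _ _ _ _ _ hδ (U i)).trans (key i).le
  have hfinal : dimTauW (fun a b : X => edist a b) L.causal L.tau ω (univ : Set X) ≤ (N : ℝ≥0∞) :=
    iInf_le_of_le N (iInf_le_of_le (by rw [hWuniv]; exact ENNReal.zero_lt_top) le_rfl)
  exact absurd hfinal (not_le.2 hNd)
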